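/- Let 𝒞 be a finite set of constructive □-free formulas and G = BLL+𝒞, where BLL is LJ extended by the rule ◇L (from Γ, A ⇒ B infer Γ, ◇A ⇒ ◇B). Suppose either every G-provable sequent is valid in the irreflexive node frame 𝒦ᵢ, or every G-provable sequent is valid in the reflexive node frame 𝒦ᵣ and G proves (⇒ p → ◇p). Then G has the Visser–Harrop property: whenever G proves Γ, {A_i → B_i}_{i∈I} ⇒ C ∨ D, where Γ is a finite multiset of Harrop □-free formulas and I is a finite (possibly empty) index set of □-free implications, then G proves Γ, {A_i → B_i}_{i∈I} ⇒ C, or Γ, {A_i → B_i}_{i∈I} ⇒ D, or Γ, {A_i → B_i}_{i∈I} ⇒ A_i for some i ∈ I. -/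

import Mathlib

set_option autoImplicit false

namespace UPT

/-- Modal formulas over atoms of type `α` (the language `ℒ = {∧,∨,→,⊤,⊥,□,◇}`). -/
inductive Fml (α : Type) : Type where
  | atom : α → Fml α
  | top  : Fml α
  | bot  : Fml α
  | and  : Fml α → Fml α → Fml α
  | or   : Fml α → Fml α → Fml α
  | imp  : Fml α → Fml α → Fml α
  | box  : Fml α → Fml α
  | dia  : Fml α → Fml α
deriving DecidableEq

variable {α β : Type}

/-- Simultaneous substitution of formulas for atoms. -/
def Fml.subst (σ : β → Fml α) : Fml β → Fml α
  | .atom b  => σ b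
  | .top     => .top
  | .bot     => .bot
  | .and A B => .and (A.subst σ) (B.subst σ)
  | .or A B  => .or (A.subst σ) (B.subst σ)
  | .imp A B => .imp (A.subst σ) (B.subst σ)
  | .box A   => .box (A.subst σ)
  | .dia A   => .dia (A.subst σ)

/-- A sequent: a finite multiset antecedent together with a succedent
containing at most one formula. -/
abbrev Seq (α : Type) : Type := Multiset (Fml α) × Option (Fml α)

/-- A rule set relates a (finite) list of premise sequents to a conclusion sequent. -/
abbrev RuleSet (α : Type) : Type := List (Seq α) → Seq α → Prop

/-- The axioms and rules of the single-conclusion sequent calculus `LJ`, stated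
schematically: they are closed under substituting arbitrary formulas for atoms
and arbitrary multisets (resp. succedents) for the context variables. -/
inductive LJRule : List (Seq α) → Seq α → Prop where
  | id (Γ : Multiset (Fml α)) (A : Fml α) : LJRule [] (A ::ₘ Γ, some A)
  | botL (Γ : Multiset (Fml α)) (Δ : Option (Fml α)) : LJRule [] (.bot ::ₘ Γ, Δ)
  | topR (Γ : Multiset (Fml α)) : LJRule [] (Γ, some .top)
  | wL (A : Fml α) (Γ : Multiset (Fml α)) (Δ : Option (Fml α)) :
      LJRule [(Γ, Δ)] (A ::ₘ Γ, Δ)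
  | wR (A : Fml α) (Γ : Multiset (Fml α)) : LJRule [(Γ, none)] (Γ, some A)
  | cL (A : Fml α) (Γ : Multiset (Fml α)) (Δ : Option (Fml α)) :
      LJRule [(A ::ₘ A ::ₘ Γ, Δ)] (A ::ₘ Γ, Δ)
  | cut (A : Fml α) (Γ : Multiset (Fml α)) (Δ : Option (Fml α)) :
      LJRule [(Γ, some A), (A ::ₘ Γ, Δ)] (Γ, Δ)
  | andL₁ (A B : Fml α) (Γ : Multiset (Fml α)) (Δ : Option (Fml α)) :
      LJRule [(A ::ₘ Γ, Δ)] (.and A B ::ₘ Γ, Δ)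
  | andL₂ (A B : Fml α) (Γ : Multiset (Fml α)) (Δ : Option (Fml α)) :
      LJRule [(B ::ₘ Γ, Δ)] (.and A B ::ₘ Γ, Δ)
  | andR (A B : Fml α) (Γ : Multiset (Fml α)) :
      LJRule [(Γ, some A), (Γ, some B)] (Γ, some (.and A B))
  | orL (A B : Fml α) (Γ : Multiset (Fml α)) (Δ : Option (Fml α)) :
      LJRule [(A ::ₘ Γ, Δ), (B ::ₘ Γ, Δ)] (.or A B ::ₘ Γ, Δ)
  | orR₁ (A B : Fml α) (Γ : Multiset (Fml α)) : LJRule [(Γ, some A)] (Γ, some (.or A B))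
  | orR₂ (A B : Fml α) (Γ : Multiset (Fml α)) : LJRule [(Γ, some B)] (Γ, some (.or A B))
  | impL (A B : Fml α) (Γ : Multiset (Fml α)) (Δ : Option (Fml α)) :
      LJRule [(Γ, some A), (B ::ₘ Γ, Δ)] (.imp A B ::ₘ Γ, Δ)
  | impR (A B : Fml α) (Γ : Multiset (Fml α)) :
      LJRule [(A ::ₘ Γ, some B)] (Γ, some (.imp A B))

/-- The rule `K_□`: from `Γ ⇒ A` infer `□Γ ⇒ □A`. -/
inductive KBoxRule : List (Seq α) → Seq α → Prop where
  | mk (Γ : Multiset (Fml α)) (A : Fml α) :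
      KBoxRule [(Γ, some A)] (Γ.map Fml.box, some (.box A))

/-- The rule `K_◇`: from `Γ, A ⇒ B` infer `□Γ, ◇A ⇒ ◇B`. -/
inductive KDiaRule : List (Seq α) → Seq α → Prop where
  | mk (Γ : Multiset (Fml α)) (A B : Fml α) :
      KDiaRule [(A ::ₘ Γ, some B)] (.dia A ::ₘ Γ.map Fml.box, some (.dia B))

/-- The rule `◇L`: from `Γ, A ⇒ B` infer `Γ, ◇A ⇒ ◇B`. -/
inductive DiaLRule : List (Seq α) → Seq α → Prop where
  | mk (Γ : Multiset (Fml α)) (A B : Fml α) :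
      DiaLRule [(A ::ₘ Γ, some B)] (.dia A ::ₘ Γ, some (.dia B))

/-- Adding a set `Ax` of axioms to a calculus: the initial sequents `⇒ σ(A)`
for every substitution instance `σ(A)` of every `A ∈ Ax`. -/
def axRule (Ax : Fml α → Prop) : RuleSet α := fun ps c =>
  ps = [] ∧ ∃ (A : Fml α) (σ : α → Fml α), Ax A ∧ c = ((0 : Multiset (Fml α)), some (A.subst σ))

/-- Using a set of sequents as additional initial sequents (assumptions). -/
def hypRule (H : Set (Seq α)) : RuleSet α := fun ps c => ps = [] ∧ c ∈ H

/-- The sequent calculus `LJ+Ax`. -/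
def LJSys (Ax : Fml α → Prop) : RuleSet α := fun ps c => LJRule ps c ∨ axRule Ax ps c

/-- The sequent calculus `CK+Ax = LJ + K_□ + K_◇ + Ax`. -/
def CKSys (Ax : Fml α → Prop) : RuleSet α := fun ps c =>
  LJRule ps c ∨ KBoxRule ps c ∨ KDiaRule ps c ∨ axRule Ax ps c

/-- The sequent calculus `CK_□+Ax = LJ + K_□ + Ax`. -/
def CKBoxSys (Ax : Fml α → Prop) : RuleSet α := fun ps c =>
  LJRule ps c ∨ KBoxRule ps c ∨ axRule Ax ps c

/-- The sequent calculus `BLL+Ax = LJ + ◇L + Ax`. -/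
def BLLSys (Ax : Fml α → Prop) : RuleSet α := fun ps c =>
  LJRule ps c ∨ DiaLRule ps c ∨ axRule Ax ps c

/-- Provability of a sequent in the calculus generated by a rule set. -/
inductive Derives (R : RuleSet α) : Multiset (Fml α) → Option (Fml α) → Prop where
  | step {ps : List (Seq α)} {c : Seq α} (hr : R ps c)
      (hp : ∀ p ∈ ps, Derives R p.1 p.2) : Derives R c.1 c.2

/-- Basic formulas: generated from atoms, `⊤`, `⊥` by `∧`, `∨`, `◇`. -/
inductive Basic : Fml α → Prop where
  | atom (a : α) : Basic (.atom a)
  | top : Basic (.top : Fml α)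
  | bot : Basic (.bot : Fml α)
  | and {A B : Fml α} : Basic A → Basic B → Basic (.and A B)
  | or {A B : Fml α} : Basic A → Basic B → Basic (.or A B)
  | dia {A : Fml α} : Basic A → Basic (.dia A)

/-- Almost positive formulas: generated from basic formulas by `∧`, `∨`, `□`, `◇`
and implications `A → B` with `A` basic and `B` almost positive. -/
inductive AlmostPos : Fml α → Prop where
  | basic {A : Fml α} : Basic A → AlmostPos A
  | and {A B : Fml α} : AlmostPos A → AlmostPos B → AlmostPos (.and A B)
  | or {A B : Fml α} : AlmostPos A → AlmostPos B → AlmostPos (.or A B)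
  | box {A : Fml α} : AlmostPos A → AlmostPos (.box A)
  | dia {A : Fml α} : AlmostPos A → AlmostPos (.dia A)
  | imp {A B : Fml α} : Basic A → AlmostPos B → AlmostPos (.imp A B)

/-- Constructive formulas: generated from basic formulas by `∧`, `□` and
implications `A → B` with `A` almost positive and `B` constructive. -/
inductive Constructive : Fml α → Prop where
  | basic {A : Fml α} : Basic A → Constructive A
  | and {A B : Fml α} : Constructive A → Constructive B → Constructive (.and A B)
  | box {A : Fml α} : Constructive A → Constructive (.box A)
  | imp {A B : Fml α} : AlmostPos A → Constructive B → Constructive (.imp A B)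

/-- Harrop formulas: atoms, `⊥`, `⊤`, closed under `∧`, `□`, and implications
`A → B` with `A` arbitrary and `B` Harrop. -/
inductive Harrop : Fml α → Prop where
  | atom (a : α) : Harrop (.atom a)
  | top : Harrop (.top : Fml α)
  | bot : Harrop (.bot : Fml α)
  | and {A B : Fml α} : Harrop A → Harrop B → Harrop (.and A B)
  | box {A : Fml α} : Harrop A → Harrop (.box A)
  | imp (A : Fml α) {B : Fml α} : Harrop B → Harrop (.imp A B)

/-- Conjunction of a list of formulas (`⋀∅ = ⊤`). -/
def conj : List (Fml α) → Fml α
  | [] => .top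
  | [A] => A
  | A :: B :: l => .and A (conj (B :: l))

/-- Disjunction of a list of formulas (`⋁∅ = ⊥`). -/
def disj : List (Fml α) → Fml α
  | [] => .bot
  | [A] => A
  | A :: B :: l => .or A (disj (B :: l))

/-- Disjunction of a succedent (at most one formula; `⋁∅ = ⊥`). -/
def odisj : Option (Fml α) → Fml α
  | none => .bot
  | some A => A

/-- The multiset `{A_i → B_i}_{i ∈ I}` of implications of an indexed family. -/
def imps (AB : List (Fml α × Fml α)) : Multiset (Fml α) :=
  ↑(AB.map fun p => Fml.imp p.1 p.2)

/-- The conjunction `⋀_{i∈I} (A_i → B_i)` of an indexed family of implications. -/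
def impConj (AB : List (Fml α × Fml α)) : Fml α :=
  conj (AB.map fun p => Fml.imp p.1 p.2)

/-- Truth in the one-node *irreflexive* frame `𝒦ᵢ` under a Boolean valuation:
`□A` is always true and `◇A` is always false; the propositional connectives
are evaluated classically. -/
def evalI (v : α → Bool) : Fml α → Bool
  | .atom a  => v a
  | .top     => true
  | .bot     => false
  | .and A B => evalI v A && evalI v B
  | .or A B  => evalI v A || evalI v B
  | .imp A B => !evalI v A || evalI v B
  | .box _   => true
  | .dia _   => false

/-- Truth in the one-node *reflexive* frame `𝒦ᵣ` under a Boolean valuation: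
`□A` and `◇A` take the value of `A`. -/
def evalR (v : α → Bool) : Fml α → Bool
  | .atom a  => v a
  | .top     => true
  | .bot     => false
  | .and A B => evalR v A && evalR v B
  | .or A B  => evalR v A || evalR v B
  | .imp A B => !evalR v A || evalR v B
  | .box A   => evalR v A
  | .dia A   => evalR v A

/-- Validity of a sequent with respect to a one-node semantics: under every
valuation, if all formulas of the antecedent are true then so is the succedent. -/
def SeqValid (ev : (α → Bool) → Fml α → Bool) (Γ : Multiset (Fml α)) (Δ : Option (Fml α)) :
    Prop :=
  ∀ v : α → Bool, (∀ A ∈ Γ, ev v A = true) → ∃ B ∈ Δ, ev v B = true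

/-- `CK+Ax` is T-free: every provable sequent is valid in the irreflexive node frame. -/
def TFree (Ax : Fml α → Prop) : Prop :=
  ∀ (Γ : Multiset (Fml α)) (Δ : Option (Fml α)), Derives (CKSys Ax) Γ Δ → SeqValid evalI Γ Δ

/-- `CK+Ax` is T-full: every provable sequent is valid in the reflexive node
frame and the calculus proves `⇒ □p → p` and `⇒ p → ◇p`. -/
def TFull (Ax : Fml α → Prop) : Prop :=
  (∀ (Γ : Multiset (Fml α)) (Δ : Option (Fml α)), Derives (CKSys Ax) Γ Δ → SeqValid evalR Γ Δ) ∧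
  (∀ a : α, Derives (CKSys Ax) 0 (some (.imp (.box (.atom a)) (.atom a)))) ∧
  (∀ a : α, Derives (CKSys Ax) 0 (some (.imp (.atom a) (.dia (.atom a)))))

/-- Classical validity of a (modality-free) sequent: `⋀Γ → ⋁Δ` is true under
every Boolean valuation of the atoms. -/
def ClValid (Γ : Multiset (Fml α)) (Δ : Option (Fml α)) : Prop :=
  ∀ v : α → Bool, (∀ A ∈ Γ, evalI v A = true) → ∃ B ∈ Δ, evalI v B = true

/-- Nonempty conjunctions of atoms. -/
inductive AtomConj : Fml α → Prop where
  | single (a : α) : AtomConj (.atom a)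
  | and {A B : Fml α} : AtomConj A → AtomConj B → AtomConj (.and A B)

/-- Implicational Horn formulas: `⊥`, atoms, and implications `⋀Q → r` with `Q`
a nonempty multiset of atoms and `r` an atom or `⊥`. -/
inductive ImpHorn : Fml α → Prop where
  | bot : ImpHorn (.bot : Fml α)
  | atom (a : α) : ImpHorn (.atom a)
  | impAtom {A : Fml α} (hA : AtomConj A) (a : α) : ImpHorn (.imp A (.atom a))
  | impBot {A : Fml α} (hA : AtomConj A) : ImpHorn (.imp A .bot)

/-- Formulas of the form `◇^n p` with `p` an atom and `n ≥ 0`. -/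
inductive DiaPowAtom : Fml α → Prop where
  | atom (a : α) : DiaPowAtom (.atom a)
  | dia {A : Fml α} : DiaPowAtom A → DiaPowAtom (.dia A)

/-- Nonempty conjunctions `⋀_{i=1}^k ◇^{n_i} p_i` of formulas `◇^{n_i} p_i`. -/
inductive DiaConj : Fml α → Prop where
  | single {A : Fml α} : DiaPowAtom A → DiaConj A
  | and {A B : Fml α} : DiaConj A → DiaConj B → DiaConj (.and A B)

/-- Modal Horn formulas: `⊥` and atoms, closed under `□` and under implications
`A → B` with `A = ⋀_{i=1}^k ◇^{n_i} p_i` and `B` modal Horn. -/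
inductive ModalHorn : Fml α → Prop where
  | bot : ModalHorn (.bot : Fml α)
  | atom (a : α) : ModalHorn (.atom a)
  | box {A : Fml α} : ModalHorn A → ModalHorn (.box A)
  | imp {A B : Fml α} : DiaConj A → ModalHorn B → ModalHorn (.imp A B)

/-- The predicate "all atoms of the formula satisfy `P`". -/
def Fml.AtomsIn (P : α → Prop) : Fml α → Prop
  | .atom a  => P a
  | .top     => True
  | .bot     => True
  | .and A B => A.AtomsIn P ∧ B.AtomsIn P
  | .or A B  => A.AtomsIn P ∧ B.AtomsIn P
  | .imp A B => A.AtomsIn P ∧ B.AtomsIn P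
  | .box A   => A.AtomsIn P
  | .dia A   => A.AtomsIn P

/-- No `◇` occurs in the formula. -/
def Fml.DiaFree : Fml α → Prop
  | .atom _  => True
  | .top     => True
  | .bot     => True
  | .and A B => A.DiaFree ∧ B.DiaFree
  | .or A B  => A.DiaFree ∧ B.DiaFree
  | .imp A B => A.DiaFree ∧ B.DiaFree
  | .box A   => A.DiaFree
  | .dia _   => False

/-- No `□` occurs in the formula. -/
def Fml.BoxFree : Fml α → Prop
  | .atom _  => True
  | .top     => True
  | .bot     => True
  | .and A B => A.BoxFree ∧ B.BoxFree
  | .or A B  => A.BoxFree ∧ B.BoxFree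
  | .imp A B => A.BoxFree ∧ B.BoxFree
  | .box _   => False
  | .dia A   => A.BoxFree

/-- The formula is modality-free (propositional). -/
def Fml.ModFree : Fml α → Prop
  | .atom _  => True
  | .top     => True
  | .bot     => True
  | .and A B => A.ModFree ∧ B.ModFree
  | .or A B  => A.ModFree ∧ B.ModFree
  | .imp A B => A.ModFree ∧ B.ModFree
  | .box _   => False
  | .dia _   => False

/-- An angling of the language: an injection `φ ↦ ⟨φ⟩` from formulas into the
atoms whose image (the angled atoms) is disjoint from a fixed infinite set of
plain atoms. -/
structure Angling (α : Type) where
  angle : Fml α → α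
  plain : Set α
  inj : Function.Injective angle
  plain_infinite : plain.Infinite
  disjoint : ∀ φ : Fml α, angle φ ∉ plain

/-- `a` is an angled atom. -/
def Angling.Angled (S : Angling α) (a : α) : Prop := ∃ φ : Fml α, S.angle φ = a

/-- The translation `t`: `⊥^t = ⊥`, `p^t = ⟨p⟩`, `⊤^t = ⟨⊤⟩`,
`(A ∘ B)^t = (A^t ∘ B^t) ∧ ⟨A ∘ B⟩` and `(○A)^t = (○A^t) ∧ ⟨○A⟩`. -/
def Angling.tr (S : Angling α) : Fml α → Fml α
  | .atom a  => .atom (S.angle (.atom a))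
  | .top     => .atom (S.angle .top)
  | .bot     => .bot
  | .and A B => .and (.and (S.tr A) (S.tr B)) (.atom (S.angle (.and A B)))
  | .or A B  => .and (.or (S.tr A) (S.tr B)) (.atom (S.angle (.or A B)))
  | .imp A B => .and (.imp (S.tr A) (S.tr B)) (.atom (S.angle (.imp A B)))
  | .box A   => .and (.box (S.tr A)) (.atom (S.angle (.box A)))
  | .dia A   => .and (.dia (S.tr A)) (.atom (S.angle (.dia A)))

/-- Action of the standard substitution on atoms: an angled atom `⟨φ⟩` is sent
to `φ`; plain atoms are fixed. -/
noncomputable def Angling.stdAtom (S : Angling α) (a : α) : Fml α :=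
  haveI := Classical.propDecidable (∃ φ : Fml α, S.angle φ = a)
  if h : ∃ φ : Fml α, S.angle φ = a then h.choose else .atom a

/-- The standard substitution `s`: replaces each angled atom `⟨φ⟩` by `φ`,
fixes the plain atoms, and commutes with all connectives. -/
noncomputable def Angling.std (S : Angling α) : Fml α → Fml α :=
  Fml.subst S.stdAtom

/-- The Visser–Harrop property of a calculus. -/
def VisserHarrop (R : RuleSet α) : Prop :=
  ∀ (Γ : Multiset (Fml α)), (∀ A ∈ Γ, Harrop A) →
  ∀ (AB : List (Fml α × Fml α)) (C D : Fml α),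
    Derives R (Γ + imps AB) (some (.or C D)) →
    Derives R (Γ + imps AB) (some C) ∨
    Derives R (Γ + imps AB) (some D) ∨
    ∃ p ∈ AB, Derives R (Γ + imps AB) (some p.1)

/-- The disjunction property of a calculus. -/
def DisjProp (R : RuleSet α) : Prop :=
  ∀ C D : Fml α, Derives R 0 (some (.or C D)) →
    Derives R 0 (some C) ∨ Derives R 0 (some D)

/-- The formula interpretation `I(Γ ⇒ Δ) = ⋀Γ → ⋁Δ` belongs to `L` (stated for
every enumeration of the antecedent multiset as a list). -/
def interpIn (L : Set (Fml α)) (s : Seq α) : Prop :=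
  ∀ l : List (Fml α), (↑l : Multiset (Fml α)) = s.1 → Fml.imp (conj l) (odisj s.2) ∈ L

/- Named modal axioms (with `p := atom 0`, `q := atom 1`). -/
def axTa : Fml ℕ := .imp (.box (.atom 0)) (.atom 0)
def axTb : Fml ℕ := .imp (.atom 0) (.dia (.atom 0))
def axBa : Fml ℕ := .imp (.dia (.box (.atom 0))) (.atom 0)
def axBb : Fml ℕ := .imp (.atom 0) (.box (.dia (.atom 0)))
def ax4a : Fml ℕ := .imp (.box (.atom 0)) (.box (.box (.atom 0)))
def ax4b : Fml ℕ := .imp (.dia (.dia (.atom 0))) (.dia (.atom 0))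
def ax5a : Fml ℕ := .imp (.dia (.box (.atom 0))) (.box (.atom 0))
def ax5b : Fml ℕ := .imp (.dia (.atom 0)) (.box (.dia (.atom 0)))
def axDiaBot : Fml ℕ := .imp (.dia .bot) .bot
def axDiaOr : Fml ℕ :=
  .imp (.dia (.or (.atom 0) (.atom 1))) (.or (.dia (.atom 0)) (.dia (.atom 1)))
def axBoxImp : Fml ℕ :=
  .imp (.imp (.dia (.atom 0)) (.box (.atom 1))) (.box (.imp (.atom 0) (.atom 1)))

/-- The axioms of `X ⊆ {T, B, 4, 5}` in both their `a`- and `b`-versions. -/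
def XAxioms (tT tB t4 t5 : Bool) : Set (Fml ℕ) :=
  (if tT then ({axTa, axTb} : Set (Fml ℕ)) else ∅) ∪
  (if tB then ({axBa, axBb} : Set (Fml ℕ)) else ∅) ∪
  (if t4 then ({ax4a, ax4b} : Set (Fml ℕ)) else ∅) ∪
  (if t5 then ({ax5a, ax5b} : Set (Fml ℕ)) else ∅)

/-- The additional axioms of `IK` over `CK`. -/
def IKExtra : Set (Fml ℕ) := {axDiaBot, axDiaOr, axBoxImp}

/-- The right rule with premises `{Γ, φ̄_i ⇒ ψ̄_i}_{i∈I}` and conclusion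
`Γ, θ̄ ⇒ η̄`, closed under all substitutions of formulas for atoms and
multisets for the context `Γ`. -/
def rightRuleInst (prems : List (List (Fml α) × Option (Fml α)))
    (θ : List (Fml α)) (η : Option (Fml α)) : RuleSet α := fun ps c =>
  ∃ (σ : α → Fml α) (Γ : Multiset (Fml α)),
    ps = prems.map (fun pr =>
        ((Γ + ↑(pr.1.map (Fml.subst σ)) : Multiset (Fml α)), pr.2.map (Fml.subst σ))) ∧
    c = ((Γ + ↑(θ.map (Fml.subst σ)) : Multiset (Fml α)), η.map (Fml.subst σ))

/-- The left rule with premises `{Γ, φ̄_i ⇒ ψ̄_i}_{i∈I} ∪ {Γ, θ̄_j ⇒ Δ}_{j∈J}`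
and conclusion `Γ, η̄ ⇒ Δ`, closed under all substitutions of formulas for
atoms and multisets for `Γ` and `Δ`. -/
def leftRuleInst (prems : List (List (Fml α) × Option (Fml α)))
    (lefts : List (List (Fml α))) (η : List (Fml α)) : RuleSet α := fun ps c =>
  ∃ (σ : α → Fml α) (Γ : Multiset (Fml α)) (Δ : Option (Fml α)),
    ps = prems.map (fun pr =>
          ((Γ + ↑(pr.1.map (Fml.subst σ)) : Multiset (Fml α)), pr.2.map (Fml.subst σ)))
        ++ lefts.map (fun θj => ((Γ + ↑(θj.map (Fml.subst σ)) : Multiset (Fml α)), Δ)) ∧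
    c = ((Γ + ↑(η.map (Fml.subst σ)) : Multiset (Fml α)), Δ)

/-- The formula `Ax_R` of a right rule. -/
def AxRight (prems : List (List (Fml α) × Option (Fml α)))
    (θ : List (Fml α)) (η : Option (Fml α)) : Fml α :=
  .imp (.and (conj (prems.map fun pr => .imp (conj pr.1) (odisj pr.2))) (conj θ)) (odisj η)

/-- The formula `Ax_R` of a left rule. -/
def AxLeft (prems : List (List (Fml α) × Option (Fml α)))
    (lefts : List (List (Fml α))) (η : List (Fml α)) : Fml α :=
  .imp (.and (conj (prems.map fun pr => .imp (conj pr.1) (odisj pr.2))) (conj η))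
    (disj (lefts.map conj))

/-- The forgetful translation `f_i`: fixes atoms, `⊤`, `⊥`, commutes with
`∧`, `∨`, `→`, `□`, and sends every `◇A` to `⊥`. -/
def fi : Fml α → Fml α
  | .atom a  => .atom a
  | .top     => .top
  | .bot     => .bot
  | .and A B => .and (fi A) (fi B)
  | .or A B  => .or (fi A) (fi B)
  | .imp A B => .imp (fi A) (fi B)
  | .box A   => .box (fi A)
  | .dia _   => .bot

/-- The forgetful translation `f_r`: fixes atoms, `⊤`, `⊥`, commutes with
`∧`, `∨`, `→`, `□`, and sends `◇A` to `f_r A`. -/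
def fr : Fml α → Fml α
  | .atom a  => .atom a
  | .top     => .top
  | .bot     => .bot
  | .and A B => .and (fr A) (fr B)
  | .or A B  => .or (fr A) (fr B)
  | .imp A B => .imp (fr A) (fr B)
  | .box A   => .box (fr A)
  | .dia A   => fr A


/-! ### Auxiliary development for Statement 18 (Aczel-slash argument) -/

section VH18

variable {Ax : Fml α → Prop}

private lemma vh_lj {ps : List (Seq α)} {c : Seq α} (h : LJRule ps c) : BLLSys Ax ps c :=
  Or.inl h

private lemma vh_dstep {ps : List (Seq α)} {Γ : Multiset (Fml α)} {Δ : Option (Fml α)}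
    (h : BLLSys Ax ps (Γ, Δ)) (hp : ∀ p ∈ ps, Derives (BLLSys Ax) p.1 p.2) :
    Derives (BLLSys Ax) Γ Δ := Derives.step h hp


private lemma vh_one {P : Seq α → Prop} {a : Seq α} (h1 : P a) : ∀ p ∈ [a], P p := by
  intro p hp
  simp only [List.mem_singleton] at hp
  subst hp; exact h1

private lemma vh_two {P : Seq α → Prop} {a b : Seq α} (h1 : P a) (h2 : P b) :
    ∀ p ∈ [a, b], P p := by
  intro p hp
  simp only [List.mem_cons, List.mem_singleton, List.not_mem_nil, or_false] at hp
  rcases hp with rfl | rfl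
  · exact h1
  · exact h2

private lemma vh_weaken {Γ : Multiset (Fml α)} {Δ : Option (Fml α)} (Ξ : Multiset (Fml α))
    (h : Derives (BLLSys Ax) Γ Δ) : Derives (BLLSys Ax) (Ξ + Γ) Δ := by
  induction Ξ using Multiset.induction with
  | empty => simpa using h
  | cons A Ξ ih =>
      rw [Multiset.cons_add]
      refine vh_dstep (vh_lj (LJRule.wL A _ Δ)) ?_
      intro p hp
      simp only [List.mem_singleton] at hp
      subst hp
      exact ih

private lemma vh_weaken0 {Δ : Option (Fml α)} (Θ : Multiset (Fml α))
    (h : Derives (BLLSys Ax) 0 Δ) : Derives (BLLSys Ax) Θ Δ := by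
  simpa using vh_weaken Θ h

private lemma vh_id {Γ : Multiset (Fml α)} {A : Fml α} :
    Derives (BLLSys Ax) (A ::ₘ Γ) (some A) :=
  vh_dstep (vh_lj (LJRule.id Γ A)) (by intro p hp; simp at hp)

private lemma vh_mem_id {Θ : Multiset (Fml α)} {A : Fml α} (h : A ∈ Θ) :
    Derives (BLLSys Ax) Θ (some A) := by
  obtain ⟨t, rfl⟩ := Multiset.exists_cons_of_mem h
  exact vh_id

private lemma vh_cut {Θ : Multiset (Fml α)} {A : Fml α} {Δ : Option (Fml α)}
    (h1 : Derives (BLLSys Ax) Θ (some A)) (h2 : Derives (BLLSys Ax) (A ::ₘ Θ) Δ) :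
    Derives (BLLSys Ax) Θ Δ := by
  exact vh_dstep (vh_lj (LJRule.cut A Θ Δ)) (vh_two h1 h2)

private lemma vh_botE {Θ : Multiset (Fml α)} {Δ : Option (Fml α)}
    (h : Derives (BLLSys Ax) Θ (some .bot)) : Derives (BLLSys Ax) Θ Δ :=
  vh_cut h (vh_dstep (vh_lj (LJRule.botL Θ Δ)) (by intro p hp; simp at hp))

private lemma vh_topI {Θ : Multiset (Fml α)} : Derives (BLLSys Ax) Θ (some .top) :=
  vh_dstep (vh_lj (LJRule.topR Θ)) (by intro p hp; simp at hp)

private lemma vh_andI {Θ : Multiset (Fml α)} {A B : Fml α}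
    (h1 : Derives (BLLSys Ax) Θ (some A)) (h2 : Derives (BLLSys Ax) Θ (some B)) :
    Derives (BLLSys Ax) Θ (some (.and A B)) := by
  exact vh_dstep (vh_lj (LJRule.andR A B Θ)) (vh_two h1 h2)

private lemma vh_orI₁ {Θ : Multiset (Fml α)} {A B : Fml α}
    (h1 : Derives (BLLSys Ax) Θ (some A)) : Derives (BLLSys Ax) Θ (some (.or A B)) := by
  refine vh_dstep (vh_lj (LJRule.orR₁ A B Θ)) ?_
  intro p hp; simp only [List.mem_singleton] at hp; subst hp; exact h1

private lemma vh_orI₂ {Θ : Multiset (Fml α)} {A B : Fml α}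
    (h1 : Derives (BLLSys Ax) Θ (some B)) : Derives (BLLSys Ax) Θ (some (.or A B)) := by
  refine vh_dstep (vh_lj (LJRule.orR₂ A B Θ)) ?_
  intro p hp; simp only [List.mem_singleton] at hp; subst hp; exact h1

private lemma vh_andE₁ {Θ : Multiset (Fml α)} {A B : Fml α}
    (h : Derives (BLLSys Ax) Θ (some (.and A B))) : Derives (BLLSys Ax) Θ (some A) := by
  refine vh_cut h (vh_dstep (vh_lj (LJRule.andL₁ A B Θ (some A))) ?_)
  intro p hp; simp only [List.mem_singleton] at hp; subst hp; exact vh_id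

private lemma vh_andE₂ {Θ : Multiset (Fml α)} {A B : Fml α}
    (h : Derives (BLLSys Ax) Θ (some (.and A B))) : Derives (BLLSys Ax) Θ (some B) := by
  refine vh_cut h (vh_dstep (vh_lj (LJRule.andL₂ A B Θ (some B))) ?_)
  intro p hp; simp only [List.mem_singleton] at hp; subst hp; exact vh_id

private lemma vh_impE {Θ : Multiset (Fml α)} {A B : Fml α}
    (h : Derives (BLLSys Ax) Θ (some (.imp A B))) (ha : Derives (BLLSys Ax) Θ (some A)) :
    Derives (BLLSys Ax) Θ (some B) := by
  exact vh_cut h (vh_dstep (vh_lj (LJRule.impL A B Θ (some B))) (vh_two ha vh_id))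

/-- Context cut: if `Γ' ⇒ Δ` and every formula of `Γ'` is provable from `Θ`,
then `Θ ⇒ Δ`. -/
private lemma vh_multicut' {Δ : Option (Fml α)} :
    ∀ (Γ' : Multiset (Fml α)) {Θ : Multiset (Fml α)},
      Derives (BLLSys Ax) (Θ + Γ') Δ →
      (∀ A ∈ Γ', Derives (BLLSys Ax) Θ (some A)) → Derives (BLLSys Ax) Θ Δ := by
  intro Γ'
  induction Γ' using Multiset.induction with
  | empty => intro Θ h _; simpa using h
  | cons A Γ' ih =>
      intro Θ h hs
      have h' : Derives (BLLSys Ax) (A ::ₘ (Θ + Γ')) Δ := by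
        rwa [show Θ + (A ::ₘ Γ') = A ::ₘ (Θ + Γ') by
          rw [add_comm, Multiset.cons_add, add_comm]] at h
      have hA : Derives (BLLSys Ax) (Θ + Γ') (some A) := by
        rw [add_comm]; exact vh_weaken Γ' (hs A (Multiset.mem_cons_self _ _))
      exact ih (vh_cut hA h') (fun B hB => hs B (Multiset.mem_cons_of_mem hB))

private lemma vh_multicut {Γ' Θ : Multiset (Fml α)} {Δ : Option (Fml α)}
    (h : Derives (BLLSys Ax) Γ' Δ)
    (hs : ∀ A ∈ Γ', Derives (BLLSys Ax) Θ (some A)) : Derives (BLLSys Ax) Θ Δ :=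
  vh_multicut' Γ' (vh_weaken Θ h) hs

private lemma Fml.subst_subst {γ : Type} (σ : β → Fml α) (τ : γ → Fml β) (X : Fml γ) :
    (X.subst τ).subst σ = X.subst (fun b => (τ b).subst σ) := by
  induction X <;> simp [Fml.subst, *]

/-- Derivability in `BLL+Ax` is closed under substitution. -/
private lemma vh_derives_subst (σ : α → Fml α) :
    ∀ {Γ : Multiset (Fml α)} {Δ : Option (Fml α)}, Derives (BLLSys Ax) Γ Δ →
      Derives (BLLSys Ax) (Γ.map (Fml.subst σ)) (Δ.map (Fml.subst σ)) := by
  intro Γ Δ h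
  induction h with
  | step hr hp ih =>
    rcases hr with hlj | hdl | hax
    · cases hlj with
      | id Γ A =>
          simp only [Multiset.map_cons, Option.map_some]
          exact vh_dstep (vh_lj (LJRule.id _ _)) (by intro p hp; simp at hp)
      | botL Γ Δ =>
          simp only [Multiset.map_cons]
          exact vh_dstep (vh_lj (LJRule.botL _ _)) (by intro p hp; simp at hp)
      | topR Γ =>
          exact vh_dstep (vh_lj (LJRule.topR _)) (by intro p hp; simp at hp)
      | wL A Γ Δ =>
          simp only [Multiset.map_cons]
          exact vh_dstep (vh_lj (LJRule.wL _ _ _)) (vh_one (ih (Γ, Δ) (by simp)))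
      | wR A Γ =>
          exact vh_dstep (vh_lj (LJRule.wR (A.subst σ) _)) (vh_one (ih (Γ, none) (by simp)))
      | cL A Γ Δ =>
          simp only [Multiset.map_cons]
          refine vh_dstep (vh_lj (LJRule.cL _ _ _)) (vh_one ?_)
          have := ih (A ::ₘ A ::ₘ Γ, Δ) (by simp)
          simpa using this
      | cut A Γ Δ =>
          refine vh_dstep (vh_lj (LJRule.cut (A.subst σ) _ _)) (vh_two ?_ ?_)
          · exact ih (Γ, some A) (by simp)
          · have := ih (A ::ₘ Γ, Δ) (by simp)
            simpa using this
      | andL₁ A B Γ Δ =>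
          simp only [Multiset.map_cons]
          refine vh_dstep (vh_lj (LJRule.andL₁ (A.subst σ) (B.subst σ) _ _)) (vh_one ?_)
          have := ih (A ::ₘ Γ, Δ) (by simp)
          simpa using this
      | andL₂ A B Γ Δ =>
          simp only [Multiset.map_cons]
          refine vh_dstep (vh_lj (LJRule.andL₂ (A.subst σ) (B.subst σ) _ _)) (vh_one ?_)
          have := ih (B ::ₘ Γ, Δ) (by simp)
          simpa using this
      | andR A B Γ =>
          refine vh_dstep (vh_lj (LJRule.andR (A.subst σ) (B.subst σ) _)) (vh_two ?_ ?_)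
          · exact ih (Γ, some A) (by simp)
          · exact ih (Γ, some B) (by simp)
      | orL A B Γ Δ =>
          simp only [Multiset.map_cons]
          refine vh_dstep (vh_lj (LJRule.orL (A.subst σ) (B.subst σ) _ _)) (vh_two ?_ ?_)
          · have := ih (A ::ₘ Γ, Δ) (by simp)
            simpa using this
          · have := ih (B ::ₘ Γ, Δ) (by simp)
            simpa using this
      | orR₁ A B Γ =>
          exact vh_dstep (vh_lj (LJRule.orR₁ (A.subst σ) (B.subst σ) _))
            (vh_one (ih (Γ, some A) (by simp)))
      | orR₂ A B Γ =>
          exact vh_dstep (vh_lj (LJRule.orR₂ (A.subst σ) (B.subst σ) _))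
            (vh_one (ih (Γ, some B) (by simp)))
      | impL A B Γ Δ =>
          simp only [Multiset.map_cons]
          refine vh_dstep (vh_lj (LJRule.impL (A.subst σ) (B.subst σ) _ _)) (vh_two ?_ ?_)
          · exact ih (Γ, some A) (by simp)
          · have := ih (B ::ₘ Γ, Δ) (by simp)
            simpa using this
      | impR A B Γ =>
          refine vh_dstep (vh_lj (LJRule.impR (A.subst σ) (B.subst σ) _)) (vh_one ?_)
          have := ih (A ::ₘ Γ, some B) (by simp)
          simpa using this
    · cases hdl with
      | mk Γ A B =>
          simp only [Multiset.map_cons]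
          refine vh_dstep (Or.inr (Or.inl (DiaLRule.mk (Γ.map (Fml.subst σ))
            (A.subst σ) (B.subst σ)))) (vh_one ?_)
          have := ih (A ::ₘ Γ, some B) (by simp)
          simpa using this
    · obtain ⟨rfl, E, τ, hE, rfl⟩ := hax
      refine vh_dstep (Or.inr (Or.inr ⟨rfl, E, fun b => (τ b).subst σ, hE, ?_⟩))
        (by intro p hp; simp at hp)
      simp [Fml.subst_subst]

/-- The Aczel slash relative to a context `Θ` and a flavour `full`
(`full = true` for the T-full case, `full = false` for the T-free case). -/
private def Slash (R : RuleSet α) (Θ : Multiset (Fml α)) (full : Bool) : Fml α → Prop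
  | .atom a => Derives R Θ (some (.atom a))
  | .top => True
  | .bot => False
  | .and A B => Slash R Θ full A ∧ Slash R Θ full B
  | .or A B => Slash R Θ full A ∨ Slash R Θ full B
  | .imp A B => Derives R Θ (some (.imp A B)) ∧ (Slash R Θ full A → Slash R Θ full B)
  | .box A => Derives R Θ (some (.box A))
  | .dia A => full = true ∧ Slash R Θ full A

/-- Slashed formulas are provable from the context. -/
private lemma vh_slash_prov {full : Bool} {Θ : Multiset (Fml α)}
    (hax : full = true → ∀ A : Fml α, Derives (BLLSys Ax) 0 (some (.imp A (.dia A)))) :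
    ∀ {A : Fml α}, Slash (BLLSys Ax) Θ full A → Derives (BLLSys Ax) Θ (some A) := by
  intro A
  induction A with
  | atom a => exact fun h => h
  | top => exact fun _ => vh_topI
  | bot => exact fun h => h.elim
  | and A B ihA ihB => exact fun h => vh_andI (ihA h.1) (ihB h.2)
  | or A B ihA ihB => exact fun h => h.elim (fun h => vh_orI₁ (ihA h)) (fun h => vh_orI₂ (ihB h))
  | imp A B ihA ihB => exact fun h => h.1
  | box A ih => exact fun h => h
  | dia A ih =>
      rintro ⟨hf, hA⟩
      exact vh_impE (vh_weaken0 Θ (hax hf A)) (ih hA)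

/-- One-node evaluation depending on the flavour. -/
private def evf : Bool → (α → Bool) → Fml α → Bool
  | true, v => evalR v
  | false, v => evalI v

private lemma evf_atom (full : Bool) (v : α → Bool) (a : α) :
    evf full v (.atom a) = v a := by cases full <;> rfl
private lemma evf_top (full : Bool) (v : α → Bool) :
    evf full v (.top : Fml α) = true := by cases full <;> rfl
private lemma evf_bot (full : Bool) (v : α → Bool) :
    evf full v (.bot : Fml α) = false := by cases full <;> rfl
private lemma evf_and (full : Bool) (v : α → Bool) (A B : Fml α) :
    evf full v (.and A B) = (evf full v A && evf full v B) := by cases full <;> rfl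
private lemma evf_or (full : Bool) (v : α → Bool) (A B : Fml α) :
    evf full v (.or A B) = (evf full v A || evf full v B) := by cases full <;> rfl
private lemma evf_imp (full : Bool) (v : α → Bool) (A B : Fml α) :
    evf full v (.imp A B) = (!evf full v A || evf full v B) := by cases full <;> rfl

private lemma evalI_subst (v : α → Bool) (τ : β → Fml α) (X : Fml β) :
    evalI v (X.subst τ) = evalI (fun b => evalI v (τ b)) X := by
  induction X <;> simp [Fml.subst, evalI, *]

private lemma evalR_subst (v : α → Bool) (τ : β → Fml α) (X : Fml β) :
    evalR v (X.subst τ) = evalR (fun b => evalR v (τ b)) X := by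
  induction X <;> simp [Fml.subst, evalR, *]

private lemma evf_subst (full : Bool) (v : α → Bool) (τ : β → Fml α) (X : Fml β) :
    evf full v (X.subst τ) = evf full (fun b => evf full v (τ b)) X := by
  cases full
  · exact evalI_subst v τ X
  · exact evalR_subst v τ X

/-- Claim B: a true basic formula is slashed (in any instance `σ`). -/
private lemma vh_claimB {full : Bool} {Θ : Multiset (Fml α)} {u : α → Bool} {σ : α → Fml α}
    (hu : ∀ a, u a = true ↔ Slash (BLLSys Ax) Θ full (σ a)) :
    ∀ {B : Fml α}, Basic B → evf full u B = true → Slash (BLLSys Ax) Θ full (B.subst σ) := by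
  intro B hB
  induction hB with
  | atom a => exact fun h => (hu a).mp (by rwa [evf_atom] at h)
  | top => exact fun _ => trivial
  | bot => intro h; rw [evf_bot] at h; exact absurd h (by simp)
  | @and A B hA hB ihA ihB =>
      intro h
      rw [evf_and, Bool.and_eq_true] at h
      exact ⟨ihA h.1, ihB h.2⟩
  | @or A B hA hB ihA ihB =>
      intro h
      rw [evf_or, Bool.or_eq_true] at h
      exact h.elim (fun h => Or.inl (ihA h)) (fun h => Or.inr (ihB h))
  | @dia A hA ih =>
      intro h
      cases full
      · exact absurd h (by simp [evf, evalI])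
      · exact ⟨rfl, ih h⟩

/-- Claim A (basic part): a slashed basic formula (instance) is true. -/
private lemma vh_claimA_basic {full : Bool} {Θ : Multiset (Fml α)} {u : α → Bool}
    {σ : α → Fml α}
    (hu : ∀ a, u a = true ↔ Slash (BLLSys Ax) Θ full (σ a)) :
    ∀ {B : Fml α}, Basic B → Slash (BLLSys Ax) Θ full (B.subst σ) → evf full u B = true := by
  intro B hB
  induction hB with
  | atom a => exact fun h => by rw [evf_atom]; exact (hu a).mpr h
  | top => exact fun _ => evf_top full u
  | bot => exact fun h => h.elim
  | @and A B hA hB ihA ihB =>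
      intro h
      rw [evf_and, Bool.and_eq_true]
      exact ⟨ihA h.1, ihB h.2⟩
  | @or A B hA hB ihA ihB =>
      intro h
      rw [evf_or, Bool.or_eq_true]
      exact h.elim (fun h => Or.inl (ihA h)) (fun h => Or.inr (ihB h))
  | @dia A hA ih =>
      rintro ⟨hf, h⟩
      subst hf
      exact ih h

/-- Claim A: a slashed almost positive □-free formula (instance) is true. -/
private lemma vh_claimA {full : Bool} {Θ : Multiset (Fml α)} {u : α → Bool} {σ : α → Fml α}
    (hu : ∀ a, u a = true ↔ Slash (BLLSys Ax) Θ full (σ a)) :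
    ∀ {A : Fml α}, AlmostPos A → A.BoxFree → Slash (BLLSys Ax) Θ full (A.subst σ) →
      evf full u A = true := by
  intro A hA
  induction hA with
  | @basic A hB => exact fun _ => vh_claimA_basic hu hB
  | @and A B hA hB ihA ihB =>
      intro hbf h
      rw [evf_and, Bool.and_eq_true]
      exact ⟨ihA hbf.1 h.1, ihB hbf.2 h.2⟩
  | @or A B hA hB ihA ihB =>
      intro hbf h
      rw [evf_or, Bool.or_eq_true]
      exact h.elim (fun h => Or.inl (ihA hbf.1 h)) (fun h => Or.inr (ihB hbf.2 h))
  | @box A hA ih => exact fun hbf => absurd hbf (by simp [Fml.BoxFree])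
  | @dia A hA ih =>
      rintro hbf ⟨hf, h⟩
      subst hf
      exact ih hbf h
  | @imp A B hA hB ih =>
      intro hbf h
      rw [evf_imp, Bool.or_eq_true]
      by_cases hq : evf full u A = true
      · exact Or.inr (ih hbf.2 (h.2 (vh_claimB hu hA hq)))
      · exact Or.inl (by simp [Bool.not_eq_true] at hq ⊢; exact hq)

/-- Claim C: a provable, true constructive □-free formula (instance) is slashed. -/
private lemma vh_claimC {full : Bool} {Θ : Multiset (Fml α)} {u : α → Bool} {σ : α → Fml α}
    (hax : full = true → ∀ A : Fml α, Derives (BLLSys Ax) 0 (some (.imp A (.dia A))))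
    (hu : ∀ a, u a = true ↔ Slash (BLLSys Ax) Θ full (σ a)) :
    ∀ {E : Fml α}, Constructive E → E.BoxFree → evf full u E = true →
      Derives (BLLSys Ax) Θ (some (E.subst σ)) → Slash (BLLSys Ax) Θ full (E.subst σ) := by
  intro E hE
  induction hE with
  | @basic A hB => exact fun _ hev _ => vh_claimB hu hB hev
  | @and A B hA hB ihA ihB =>
      intro hbf hev hprov
      rw [evf_and, Bool.and_eq_true] at hev
      exact ⟨ihA hbf.1 hev.1 (vh_andE₁ hprov), ihB hbf.2 hev.2 (vh_andE₂ hprov)⟩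
  | @box A hA ih => exact fun hbf => absurd hbf (by simp [Fml.BoxFree])
  | @imp A B hA hB ih =>
      intro hbf hev hprov
      refine ⟨hprov, fun hsA => ?_⟩
      have hevA : evf full u A = true := vh_claimA hu hA hbf.1 hsA
      rw [evf_imp, Bool.or_eq_true] at hev
      rcases hev with hev | hev
      · rw [hevA] at hev; exact absurd hev (by simp)
      · exact ih hbf.2 hev (vh_impE hprov (vh_slash_prov hax hsA))

/-- Soundness of the slash for `BLL+Ax` derivations. -/
private lemma vh_sound {full : Bool} {Θ : Multiset (Fml α)}
    (hCS : ∀ E, Ax E → Constructive E ∧ E.BoxFree)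
    (hax : full = true → ∀ A : Fml α, Derives (BLLSys Ax) 0 (some (.imp A (.dia A))))
    (hsem : ∀ (Γ : Multiset (Fml α)) (Δ : Option (Fml α)),
        Derives (BLLSys Ax) Γ Δ → SeqValid (evf full) Γ Δ)
    {Γ' : Multiset (Fml α)} {Δ' : Option (Fml α)} (h : Derives (BLLSys Ax) Γ' Δ') :
    (∀ A ∈ Γ', Slash (BLLSys Ax) Θ full A) →
      ∃ B, Δ' = some B ∧ Slash (BLLSys Ax) Θ full B := by
  induction h with
  | @step ps c hr hp ih =>
    intro hsl
    rcases hr with hlj | hdl | hax'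
    · cases hlj with
      | id Γ A => exact ⟨A, rfl, hsl A (Multiset.mem_cons_self _ _)⟩
      | botL Γ Δ => exact absurd (hsl .bot (Multiset.mem_cons_self _ _)) (fun h => h)
      | topR Γ => exact ⟨.top, rfl, trivial⟩
      | wL A Γ Δ =>
          exact ih (Γ, Δ) (by simp) (fun B hB => hsl B (Multiset.mem_cons_of_mem hB))
      | wR A Γ =>
          obtain ⟨B, hB, -⟩ := ih (Γ, none) (by simp) hsl
          exact absurd hB (by simp)
      | cL A Γ Δ =>
          refine ih (A ::ₘ A ::ₘ Γ, Δ) (by simp) ?_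
          intro B hB
          rcases Multiset.mem_cons.mp hB with rfl | hB
          · exact hsl B (Multiset.mem_cons_self _ _)
          · exact hsl B hB
      | cut A Γ Δ =>
          obtain ⟨A', hA', hslA⟩ := ih (Γ, some A) (by simp) hsl
          obtain rfl : A = A' := by injection hA'
          refine ih (A ::ₘ Γ, Δ) (by simp) ?_
          intro B hB
          rcases Multiset.mem_cons.mp hB with rfl | hB
          · exact hslA
          · exact hsl B hB
      | andL₁ A B Γ Δ =>
          refine ih (A ::ₘ Γ, Δ) (by simp) ?_
          intro X hX
          rcases Multiset.mem_cons.mp hX with rfl | hX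
          · exact (hsl _ (Multiset.mem_cons_self _ _)).1
          · exact hsl X (Multiset.mem_cons_of_mem hX)
      | andL₂ A B Γ Δ =>
          refine ih (B ::ₘ Γ, Δ) (by simp) ?_
          intro X hX
          rcases Multiset.mem_cons.mp hX with rfl | hX
          · exact (hsl _ (Multiset.mem_cons_self _ _)).2
          · exact hsl X (Multiset.mem_cons_of_mem hX)
      | andR A B Γ =>
          obtain ⟨A', hA', hslA⟩ := ih (Γ, some A) (by simp) hsl
          obtain rfl : A = A' := by injection hA'
          obtain ⟨B', hB', hslB⟩ := ih (Γ, some B) (by simp) hsl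
          obtain rfl : B = B' := by injection hB'
          exact ⟨.and A B, rfl, hslA, hslB⟩
      | orL A B Γ Δ =>
          rcases hsl _ (Multiset.mem_cons_self _ _) with hA | hB
          · refine ih (A ::ₘ Γ, Δ) (by simp) ?_
            intro X hX
            rcases Multiset.mem_cons.mp hX with rfl | hX
            · exact hA
            · exact hsl X (Multiset.mem_cons_of_mem hX)
          · refine ih (B ::ₘ Γ, Δ) (by simp) ?_
            intro X hX
            rcases Multiset.mem_cons.mp hX with rfl | hX
            · exact hB
            · exact hsl X (Multiset.mem_cons_of_mem hX)
      | orR₁ A B Γ =>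
          obtain ⟨A', hA', hslA⟩ := ih (Γ, some A) (by simp) hsl
          obtain rfl : A = A' := by injection hA'
          exact ⟨.or A B, rfl, Or.inl hslA⟩
      | orR₂ A B Γ =>
          obtain ⟨B', hB', hslB⟩ := ih (Γ, some B) (by simp) hsl
          obtain rfl : B = B' := by injection hB'
          exact ⟨.or A B, rfl, Or.inr hslB⟩
      | impL A B Γ Δ =>
          have himp := hsl _ (Multiset.mem_cons_self _ _)
          have hΓ : ∀ X ∈ Γ, Slash (BLLSys Ax) Θ full X :=
            fun X hX => hsl X (Multiset.mem_cons_of_mem hX)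
          obtain ⟨A', hA', hslA⟩ := ih (Γ, some A) (by simp) hΓ
          obtain rfl : A = A' := by injection hA'
          refine ih (B ::ₘ Γ, Δ) (by simp) ?_
          intro X hX
          rcases Multiset.mem_cons.mp hX with rfl | hX
          · exact himp.2 hslA
          · exact hΓ X hX
      | impR A B Γ =>
          refine ⟨.imp A B, rfl, ?_, ?_⟩
          · have hder : Derives (BLLSys Ax) Γ (some (.imp A B)) :=
              Derives.step (vh_lj (LJRule.impR A B Γ)) hp
            exact vh_multicut hder (fun X hX => vh_slash_prov hax (hsl X hX))
          · intro hA
            have hall : ∀ X ∈ A ::ₘ Γ, Slash (BLLSys Ax) Θ full X := by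
              intro X hX
              rcases Multiset.mem_cons.mp hX with rfl | hX
              · exact hA
              · exact hsl X hX
            obtain ⟨B', hB', hslB⟩ := ih (A ::ₘ Γ, some B) (by simp) hall
            obtain rfl : B = B' := by injection hB'
            exact hslB
    · cases hdl with
      | mk Γ A B =>
          obtain ⟨hf, hslA⟩ := hsl _ (Multiset.mem_cons_self _ _)
          have hall : ∀ X ∈ A ::ₘ Γ, Slash (BLLSys Ax) Θ full X := by
            intro X hX
            rcases Multiset.mem_cons.mp hX with rfl | hX
            · exact hslA
            · exact hsl X (Multiset.mem_cons_of_mem hX)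
          obtain ⟨B', hB', hslB⟩ := ih (A ::ₘ Γ, some B) (by simp) hall
          obtain rfl : B = B' := by injection hB'
          exact ⟨.dia B, rfl, hf, hslB⟩
    · obtain ⟨rfl, E, σ, hE, rfl⟩ := hax'
      refine ⟨E.subst σ, rfl, ?_⟩
      classical
      set u : α → Bool := fun a => decide (Slash (BLLSys Ax) Θ full (σ a)) with hudef
      have hu : ∀ a, u a = true ↔ Slash (BLLSys Ax) Θ full (σ a) := by
        intro a; simp [hudef]
      set τ' : α → Fml α := fun a => if u a = true then Fml.top else Fml.bot with hτdef
      have hτval : ∀ (v : α → Bool) a, evf full v (τ' a) = u a := by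
        intro v a
        by_cases hua : u a = true
        · simp [hτdef, hua, evf_top]
        · simp only [Bool.not_eq_true] at hua
          simp [hτdef, hua, evf_bot]
      have hτder : Derives (BLLSys Ax) 0 (some (E.subst τ')) :=
        vh_dstep (Or.inr (Or.inr ⟨rfl, E, τ', hE, rfl⟩))
          (fun p hp => absurd hp List.not_mem_nil)
      have hval := hsem _ _ hτder u (by intro X hX; simp at hX)
      obtain ⟨B, hB, hBv⟩ := hval
      rw [Option.mem_def, Option.some_inj] at hB
      subst hB
      rw [evf_subst] at hBv
      have hfun : (fun a => evf full u (τ' a)) = u := funext (hτval u)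
      rw [hfun] at hBv
      have hprov : Derives (BLLSys Ax) Θ (some (E.subst σ)) :=
        vh_weaken0 Θ (vh_dstep (Or.inr (Or.inr ⟨rfl, E, σ, hE, rfl⟩))
          (fun p hp => absurd hp List.not_mem_nil))
      exact vh_claimC hax hu (hCS E hE).1 (hCS E hE).2 hBv hprov

/-- Provable □-free Harrop formulas are slashed. -/
private lemma vh_harrop {full : Bool} {Θ : Multiset (Fml α)}
    (hax : full = true → ∀ A : Fml α, Derives (BLLSys Ax) 0 (some (.imp A (.dia A))))
    (hcons : ¬ Derives (BLLSys Ax) Θ (some .bot)) :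
    ∀ {H : Fml α}, Harrop H → H.BoxFree → Derives (BLLSys Ax) Θ (some H) →
      Slash (BLLSys Ax) Θ full H := by
  intro H hH
  induction hH with
  | atom a => exact fun _ h => h
  | top => exact fun _ _ => trivial
  | bot => exact fun _ h => absurd h hcons
  | @and A B hA hB ihA ihB =>
      exact fun hbf h => ⟨ihA hbf.1 (vh_andE₁ h), ihB hbf.2 (vh_andE₂ h)⟩
  | @box A hA ih => exact fun hbf => absurd hbf (by simp [Fml.BoxFree])
  | imp A hB ih =>
      intro hbf h
      exact ⟨h, fun hsA => ih hbf.2 (vh_impE h (vh_slash_prov hax hsA))⟩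

end VH18

/-- any T-free or T-full calculus `BLL+𝒞` with `𝒞` a finite set
of constructive □-free formulas has the Visser–Harrop property (over the
□-free fragment). -/
theorem statement_18 (CS : Finset (Fml ℕ)) (hCS : ∀ A ∈ CS, Constructive A ∧ A.BoxFree)
    (hTF : (∀ (Γ : Multiset (Fml ℕ)) (Δ : Option (Fml ℕ)),
              Derives (BLLSys (· ∈ CS)) Γ Δ → SeqValid evalI Γ Δ) ∨
           ((∀ (Γ : Multiset (Fml ℕ)) (Δ : Option (Fml ℕ)),
              Derives (BLLSys (· ∈ CS)) Γ Δ → SeqValid evalR Γ Δ) ∧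
            (∀ n : ℕ, Derives (BLLSys (· ∈ CS)) 0
              (some (.imp (.atom n) (.dia (.atom n)))))))
    (Γ : Multiset (Fml ℕ)) (hΓ : ∀ A ∈ Γ, Harrop A ∧ A.BoxFree)
    (AB : List (Fml ℕ × Fml ℕ)) (hAB : ∀ p ∈ AB, p.1.BoxFree ∧ p.2.BoxFree)
    (C D : Fml ℕ) (hC : C.BoxFree) (hD : D.BoxFree)
    (h : Derives (BLLSys (· ∈ CS)) (Γ + imps AB) (some (.or C D))) :
    Derives (BLLSys (· ∈ CS)) (Γ + imps AB) (some C) ∨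
    Derives (BLLSys (· ∈ CS)) (Γ + imps AB) (some D) ∨
    ∃ p ∈ AB, Derives (BLLSys (· ∈ CS)) (Γ + imps AB) (some p.1) := by
  classical
  by_contra h0
  push_neg at h0
  obtain ⟨hn1, hn2, hn3⟩ := h0
  have key : ∀ (full : Bool),
      (full = true → ∀ A : Fml ℕ,
        Derives (BLLSys (· ∈ CS)) 0 (some (.imp A (.dia A)))) →
      (∀ (Γ' : Multiset (Fml ℕ)) (Δ' : Option (Fml ℕ)),
        Derives (BLLSys (· ∈ CS)) Γ' Δ' → SeqValid (evf full) Γ' Δ') → False := by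
    intro full hax hsem
    have hcons : ¬ Derives (BLLSys (· ∈ CS)) (Γ + imps AB) (some .bot) :=
      fun hb => hn1 (vh_botE hb)
    have hslΘ : ∀ A ∈ Γ + imps AB, Slash (BLLSys (· ∈ CS)) (Γ + imps AB) full A := by
      intro A hA
      rcases Multiset.mem_add.mp hA with hA' | hA'
      · exact vh_harrop hax hcons (hΓ A hA').1 (hΓ A hA').2
          (vh_mem_id (Multiset.mem_add.mpr (Or.inl hA')))
      · simp only [imps, Multiset.mem_coe, List.mem_map] at hA'
        obtain ⟨p, hp, rfl⟩ := hA'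
        refine ⟨vh_mem_id (Multiset.mem_add.mpr (Or.inr ?_)), ?_⟩
        · simp only [imps, Multiset.mem_coe, List.mem_map]
          exact ⟨p, hp, rfl⟩
        · intro hsA
          exact absurd (vh_slash_prov hax hsA) (hn3 p hp)
    obtain ⟨B, hB, hslB⟩ := vh_sound (fun E hE => hCS E hE) hax hsem h hslΘ
    obtain rfl : Fml.or C D = B := by injection hB
    have hslB' : Slash (BLLSys (· ∈ CS)) (Γ + imps AB) full C ∨
        Slash (BLLSys (· ∈ CS)) (Γ + imps AB) full D := hslB
    rcases hslB' with hC' | hD'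
    · exact hn1 (vh_slash_prov hax hC')
    · exact hn2 (vh_slash_prov hax hD')
  rcases hTF with hi | ⟨hrr, hbb⟩
  · exact key false (fun hf => absurd hf (by simp)) hi
  · refine key true (fun _ A => ?_) hrr
    have := vh_derives_subst (fun _ => A) (hbb 0)
    simpa [Fml.subst] using this

end UPT
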